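/- arXiv:2304.02590 — 2 statements merged into one kernel-verified Lean document; each statement's English description precedes it below -/
import Mathlib

section
/- There exist stable matching instances A and B on the same 6 workers and 6 firms, where B is obtained from A by changing the preference orders of exactly two workers and exactly two firms, together with matchings M₁ and M₂ stable under both A and B, such that all four matchings M₁ ∨_A M₂, M₁ ∧_A M₂, M₁ ∨_B M₂ and M₁ ∧_B M₂ are stable under both A and B, yet M₁ ∨_A M₂ ≠ M₁ ∨_B M₂ and M₁ ∧_A M₂ ≠ M₁ ∧_B M₂. Hence M_A ∩ M_B can be a sublattice of both lattices while the two induced partial orders on it differ. -/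
/-- A stable matching instance on `n` workers and `n` firms: each worker `w` has a strict
total preference order over firms encoded by an injective rank function `wRank w`
(lower rank = more preferred), and each firm `f` has one over workers (`fRank f`). -/
structure SMInstance (n : ℕ) where
  wRank : Fin n → Fin n → Fin n
  fRank : Fin n → Fin n → Fin n
  wRank_inj : ∀ w, Function.Injective (wRank w)
  fRank_inj : ∀ f, Function.Injective (fRank f)

/-- `(w, f)` is a blocking pair of the matching `M` under instance `I`:
`M w ≠ f`, `w` strictly prefers `f` to `M w`, and `f` strictly prefers `w`
to its `M`-partner (the worker `w'` with `M w' = f`). -/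
def Blocking {n : ℕ} (I : SMInstance n) (M : Fin n → Fin n) (w f : Fin n) : Prop :=
  M w ≠ f ∧ I.wRank w f < I.wRank w (M w) ∧
    ∃ w', M w' = f ∧ I.fRank f w < I.fRank f w'

/-- A matching (bijection) is stable under `I` if it has no blocking pair. -/
def IsStable {n : ℕ} (I : SMInstance n) (M : Fin n → Fin n) : Prop :=
  Function.Bijective M ∧ ∀ w f, ¬ Blocking I M w f

/-- The join `M₁ ∨_I M₂`: each worker gets its less preferred partner. -/
def joinMap {n : ℕ} (I : SMInstance n) (M₁ M₂ : Fin n → Fin n) : Fin n → Fin n :=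
  fun w => if I.wRank w (M₁ w) < I.wRank w (M₂ w) then M₂ w else M₁ w

/-- The meet `M₁ ∧_I M₂`: each worker gets its more preferred partner. -/
def meetMap {n : ℕ} (I : SMInstance n) (M₁ M₂ : Fin n → Fin n) : Fin n → Fin n :=
  fun w => if I.wRank w (M₁ w) < I.wRank w (M₂ w) then M₁ w else M₂ w


instance {n : ℕ} (I : SMInstance n) (M : Fin n → Fin n) (w f : Fin n) :
    Decidable (Blocking I M w f) := by unfold Blocking; infer_instance

instance {n : ℕ} (I : SMInstance n) (M : Fin n → Fin n) :
    Decidable (IsStable I M) := by unfold IsStable; infer_instance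

def wA : Fin 6 → Fin 6 → Fin 6 :=
  ![![0,1,2,3,4,5], ![5,0,1,2,3,4], ![4,5,0,1,2,3], ![3,4,5,0,1,2], ![2,3,4,5,0,1], ![1,2,3,4,5,0]]

def fA : Fin 6 → Fin 6 → Fin 6 :=
  ![![1,0,2,3,4,5], ![0,1,2,3,4,5], ![4,5,0,1,2,3], ![3,4,5,0,1,2], ![2,3,4,5,0,1], ![1,2,3,4,5,0]]

def wB : Fin 6 → Fin 6 → Fin 6 :=
  ![![1,0,2,3,4,5], ![0,5,1,2,3,4], ![4,5,0,1,2,3], ![3,4,5,0,1,2], ![2,3,4,5,0,1], ![1,2,3,4,5,0]]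

def fB : Fin 6 → Fin 6 → Fin 6 :=
  ![![0,1,2,3,4,5], ![1,0,2,3,4,5], ![4,5,0,1,2,3], ![3,4,5,0,1,2], ![2,3,4,5,0,1], ![1,2,3,4,5,0]]

def instA : SMInstance 6 := ⟨wA, fA, by decide, by decide⟩
def instB : SMInstance 6 := ⟨wB, fB, by decide, by decide⟩

/-- there are instances A and B on 6 workers and 6 firms, differing in the
preferences of exactly two workers and exactly two firms, and matchings M₁, M₂ stable
under both, such that all four of the A-join, A-meet, B-join, B-meet are stable under
both A and B, yet the A-join differs from the B-join and the A-meet from the B-meet. -/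
theorem stmt9 :
    ∃ (A B : SMInstance 6) (w₁ w₂ f₁ f₂ : Fin 6),
      w₁ ≠ w₂ ∧ f₁ ≠ f₂ ∧
      A.wRank w₁ ≠ B.wRank w₁ ∧ A.wRank w₂ ≠ B.wRank w₂ ∧
      (∀ w, w ≠ w₁ → w ≠ w₂ → A.wRank w = B.wRank w) ∧
      A.fRank f₁ ≠ B.fRank f₁ ∧ A.fRank f₂ ≠ B.fRank f₂ ∧
      (∀ f, f ≠ f₁ → f ≠ f₂ → A.fRank f = B.fRank f) ∧
      ∃ M₁ M₂ : Fin 6 → Fin 6,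
        (IsStable A M₁ ∧ IsStable B M₁) ∧ (IsStable A M₂ ∧ IsStable B M₂) ∧
        (IsStable A (joinMap A M₁ M₂) ∧ IsStable B (joinMap A M₁ M₂)) ∧
        (IsStable A (meetMap A M₁ M₂) ∧ IsStable B (meetMap A M₁ M₂)) ∧
        (IsStable A (joinMap B M₁ M₂) ∧ IsStable B (joinMap B M₁ M₂)) ∧
        (IsStable A (meetMap B M₁ M₂) ∧ IsStable B (meetMap B M₁ M₂)) ∧
        joinMap A M₁ M₂ ≠ joinMap B M₁ M₂ ∧
        meetMap A M₁ M₂ ≠ meetMap B M₁ M₂ := by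
  refine ⟨instA, instB, 0, 1, 0, 1, ?_⟩
  refine ⟨by decide, by decide, by decide, by decide, by decide, by decide, by decide,
    by decide, ![0,1,2,3,4,5], ![1,0,2,3,4,5], ?_⟩
  refine ⟨by decide, by decide, by decide, by decide, by decide, by decide, by decide, by decide⟩
end

section
/- Let A and B be stable matching instances on the same n workers and n firms such that all workers except possibly one worker w₁ have identical preference orders in A and B (the firms' preferences may differ arbitrarily; i.e., A and B are (1,n)). Then for any two matchings M₁, M₂ stable under both A and B: M₁ ∨_A M₂ = M₁ ∨_B M₂ and M₁ ∧_A M₂ = M₁ ∧_B M₂, and both of these matchings are stable under both A and B. In particular, M_A ∩ M_B is a sublattice of the lattice of A-stable matchings and of the lattice of B-stable matchings. -/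
section Aux

variable {n : ℕ}

lemma join_mem (I : SMInstance n) (M₁ M₂ : Fin n → Fin n) (w : Fin n) :
    joinMap I M₁ M₂ w = M₁ w ∨ joinMap I M₁ M₂ w = M₂ w := by
  unfold joinMap; split
  · exact Or.inr rfl
  · exact Or.inl rfl

lemma le_join₁ (I : SMInstance n) (M₁ M₂ : Fin n → Fin n) (w : Fin n) :
    I.wRank w (M₁ w) ≤ I.wRank w (joinMap I M₁ M₂ w) := by
  unfold joinMap; split
  · exact le_of_lt (by assumption)
  · exact le_refl _

lemma le_join₂ (I : SMInstance n) (M₁ M₂ : Fin n → Fin n) (w : Fin n) :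
    I.wRank w (M₂ w) ≤ I.wRank w (joinMap I M₁ M₂ w) := by
  unfold joinMap; split
  · exact le_refl _
  · exact not_lt.1 (by assumption)

lemma meet_mem (I : SMInstance n) (M₁ M₂ : Fin n → Fin n) (w : Fin n) :
    meetMap I M₁ M₂ w = M₁ w ∨ meetMap I M₁ M₂ w = M₂ w := by
  unfold meetMap; split
  · exact Or.inl rfl
  · exact Or.inr rfl

lemma meet_le₁ (I : SMInstance n) (M₁ M₂ : Fin n → Fin n) (w : Fin n) :
    I.wRank w (meetMap I M₁ M₂ w) ≤ I.wRank w (M₁ w) := by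
  unfold meetMap; split
  · exact le_refl _
  · exact not_lt.1 (by assumption)

lemma meet_le₂ (I : SMInstance n) (M₁ M₂ : Fin n → Fin n) (w : Fin n) :
    I.wRank w (meetMap I M₁ M₂ w) ≤ I.wRank w (M₂ w) := by
  unfold meetMap; split
  · exact le_of_lt (by assumption)
  · exact le_refl _

lemma joinMap_comm (I : SMInstance n) (M₁ M₂ : Fin n → Fin n) :
    joinMap I M₂ M₁ = joinMap I M₁ M₂ := by
  funext w
  unfold joinMap
  by_cases h : I.wRank w (M₁ w) < I.wRank w (M₂ w)
  · rw [if_neg (asymm h), if_pos h]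
  · rw [if_neg h]
    by_cases h2 : I.wRank w (M₂ w) < I.wRank w (M₁ w)
    · rw [if_pos h2]
    · rw [if_neg h2]
      exact I.wRank_inj w (le_antisymm (not_lt.1 h) (not_lt.1 h2))

/-- Core contradiction: if `Ma w = Mb w'` with `w ≠ w'` and each of `w, w'` weakly
prefers that common firm within its pair, we get a blocking pair. -/
lemma core (I : SMInstance n) {Ma Mb : Fin n → Fin n}
    (ha : IsStable I Ma) (hb : IsStable I Mb) {w w' : Fin n} (hne : w ≠ w')
    (hfa : Ma w = Mb w')
    (h1 : I.wRank w (Ma w) ≤ I.wRank w (Mb w))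
    (h2 : I.wRank w' (Mb w') ≤ I.wRank w' (Ma w')) : False := by
  have hbne : Mb w ≠ Ma w := by
    intro e
    exact hne (hb.1.1 (e.trans hfa))
  have hane : Ma w' ≠ Ma w := by
    intro e
    exact hne (ha.1.1 e).symm
  have hlt1 : I.wRank w (Ma w) < I.wRank w (Mb w) :=
    lt_of_le_of_ne h1 (fun e => hbne (I.wRank_inj w e).symm)
  have hlt2 : I.wRank w' (Ma w) < I.wRank w' (Ma w') := by
    rw [hfa]
    exact lt_of_le_of_ne h2 (fun e => hane ((I.wRank_inj w' e).symm.trans hfa.symm))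
  rcases lt_or_gt_of_ne (show I.fRank (Ma w) w ≠ I.fRank (Ma w) w' from
      fun e => hne (I.fRank_inj (Ma w) e)) with hs | hs
  · exact hb.2 w (Ma w) ⟨hbne, hlt1, w', hfa.symm, hs⟩
  · exact ha.2 w' (Ma w) ⟨hane, hlt2, w, rfl, hs⟩

lemma join_surjective (I : SMInstance n) {M₁ M₂ : Fin n → Fin n}
    (h₁ : IsStable I M₁) (h₂ : IsStable I M₂) :
    Function.Surjective (joinMap I M₁ M₂) := by
  intro f
  obtain ⟨w, hw⟩ := h₁.1.2 f
  obtain ⟨w', hw'⟩ := h₂.1.2 f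
  by_contra hnone
  push_neg at hnone
  have hJw : joinMap I M₁ M₂ w = M₂ w := by
    rcases join_mem I M₁ M₂ w with h | h
    · exact absurd (h.trans hw) (hnone w)
    · exact h
  have hJw' : joinMap I M₁ M₂ w' = M₁ w' := by
    rcases join_mem I M₁ M₂ w' with h | h
    · exact h
    · exact absurd (h.trans hw') (hnone w')
  have hne : w ≠ w' := by
    rintro rfl
    have : M₁ w = M₂ w := hw.trans hw'.symm
    rcases join_mem I M₁ M₂ w with h | h
    · exact hnone w (h.trans hw)
    · exact hnone w (h.trans hw')
  exact core I h₁ h₂ hne (hw.trans hw'.symm)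
    (hJw ▸ le_join₁ I M₁ M₂ w) (hJw' ▸ le_join₂ I M₁ M₂ w')

lemma meet_injective (I : SMInstance n) {M₁ M₂ : Fin n → Fin n}
    (h₁ : IsStable I M₁) (h₂ : IsStable I M₂) :
    Function.Injective (meetMap I M₁ M₂) := by
  intro w w' heq
  by_contra hne
  rcases meet_mem I M₁ M₂ w with hw | hw <;> rcases meet_mem I M₁ M₂ w' with hw' | hw'
  · exact hne (h₁.1.1 ((hw.symm.trans heq).trans hw'))
  · exact core I h₁ h₂ hne ((hw.symm.trans heq).trans hw')
      (hw ▸ meet_le₂ I M₁ M₂ w) (hw' ▸ meet_le₁ I M₁ M₂ w')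
  · exact core I h₂ h₁ hne ((hw.symm.trans heq).trans hw')
      (hw ▸ meet_le₁ I M₁ M₂ w) (hw' ▸ meet_le₂ I M₁ M₂ w')
  · exact hne (h₂.1.1 ((hw.symm.trans heq).trans hw'))

/-- If `(w,f)` blocks the join and `f`'s join-partner `w'` satisfies `Ma w' = f`,
we get a contradiction with stability of `Ma` or `Mb`. -/
lemma join_no_block_core (I : SMInstance n) {Ma Mb : Fin n → Fin n}
    (ha : IsStable I Ma) (hb : IsStable I Mb)
    (hJinj : Function.Injective (joinMap I Ma Mb))
    {w f w' : Fin n} (hw' : Ma w' = f) (hJw' : joinMap I Ma Mb w' = f)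
    (hne : joinMap I Ma Mb w ≠ f)
    (hpref : I.wRank w f < I.wRank w (joinMap I Ma Mb w))
    (hfirm : I.fRank f w < I.fRank f w') : False := by
  have hMaw : Ma w ≠ f := by
    rintro rfl
    have : w = w' := ha.1.1 hw'.symm
    exact hne (this ▸ hJw')
  by_cases h : I.wRank w f < I.wRank w (Ma w)
  · exact ha.2 w f ⟨hMaw, h, w', hw', hfirm⟩
  · have hMaf : I.wRank w (Ma w) < I.wRank w f :=
      lt_of_le_of_ne (not_lt.1 h) (fun e => hMaw (I.wRank_inj w e))
    have hJne : joinMap I Ma Mb w ≠ Ma w := by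
      intro e
      exact absurd (hpref.trans (e ▸ hMaf)) (lt_irrefl _)
    have hJw : joinMap I Ma Mb w = Mb w := (join_mem I Ma Mb w).resolve_left hJne
    have hMbw : Mb w ≠ f := hJw ▸ hne
    have hprefb : I.wRank w f < I.wRank w (Mb w) := hJw ▸ hpref
    obtain ⟨w'', hw''⟩ := hb.1.2 f
    by_cases hww : w'' = w'
    · exact hb.2 w f ⟨hMbw, hprefb, w'', hw'', hww ▸ hfirm⟩
    · have hJw'' : joinMap I Ma Mb w'' ≠ f := by
        intro e
        exact hww (hJinj (e.trans hJw'.symm))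
      have hMa'' : Ma w'' ≠ f := by
        intro e
        exact hww (ha.1.1 (e.trans hw'.symm))
      have hJa : joinMap I Ma Mb w'' = Ma w'' := by
        rcases join_mem I Ma Mb w'' with h | h
        · exact h
        · exact absurd (h.trans hw'') hJw''
      have hlt'' : I.wRank w'' f < I.wRank w'' (Ma w'') := by
        have := le_join₂ I Ma Mb w''
        rw [hJa, hw''] at this
        exact lt_of_le_of_ne this (fun e => hMa'' (I.wRank_inj w'' e).symm)
      by_cases hs : I.fRank f w'' < I.fRank f w'
      · exact ha.2 w'' f ⟨hMa'', hlt'', w', hw', hs⟩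
      · exact hb.2 w f ⟨hMbw, hprefb, w'', hw'', lt_of_lt_of_le hfirm (not_lt.1 hs)⟩

lemma join_stable (I : SMInstance n) {M₁ M₂ : Fin n → Fin n}
    (h₁ : IsStable I M₁) (h₂ : IsStable I M₂) :
    IsStable I (joinMap I M₁ M₂) := by
  have hbij : Function.Bijective (joinMap I M₁ M₂) :=
    Finite.surjective_iff_bijective.1 (join_surjective I h₁ h₂)
  refine ⟨hbij, ?_⟩
  rintro w f ⟨hne, hpref, w', hJw', hfirm⟩
  rcases join_mem I M₁ M₂ w' with h | h
  · exact join_no_block_core I h₁ h₂ hbij.1 (h.symm.trans hJw') hJw' hne hpref hfirm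
  · have hc : joinMap I M₂ M₁ = joinMap I M₁ M₂ := joinMap_comm I M₁ M₂
    rw [← hc] at hJw' hne hpref
    exact join_no_block_core I h₂ h₁ (hc ▸ hbij.1) (h.symm.trans (hc ▸ hJw')) hJw'
      hne hpref hfirm

lemma meet_stable (I : SMInstance n) {M₁ M₂ : Fin n → Fin n}
    (h₁ : IsStable I M₁) (h₂ : IsStable I M₂) :
    IsStable I (meetMap I M₁ M₂) := by
  refine ⟨Finite.injective_iff_bijective.1 (meet_injective I h₁ h₂), ?_⟩
  rintro w f ⟨hne, hpref, w', hKw', hfirm⟩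
  rcases meet_mem I M₁ M₂ w' with h | h
  · have hlt : I.wRank w f < I.wRank w (M₁ w) :=
      lt_of_lt_of_le hpref (meet_le₁ I M₁ M₂ w)
    refine h₁.2 w f ⟨?_, hlt, w', h.symm.trans hKw', hfirm⟩
    intro e
    rw [e] at hlt; exact lt_irrefl _ hlt
  · have hlt : I.wRank w f < I.wRank w (M₂ w) :=
      lt_of_lt_of_le hpref (meet_le₂ I M₁ M₂ w)
    refine h₂.2 w f ⟨?_, hlt, w', h.symm.trans hKw', hfirm⟩
    intro e
    rw [e] at hlt; exact lt_irrefl _ hlt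

lemma bij_eq_of_agree {f g : Fin n → Fin n} (hf : Function.Bijective f)
    (hg : Function.Bijective g) (w₁ : Fin n) (h : ∀ w, w ≠ w₁ → f w = g w) :
    f = g := by
  funext x
  by_cases hx : x = w₁
  · subst hx
    obtain ⟨y, hy⟩ := hg.2 (f x)
    by_cases hyx : y = x
    · exact (hyx ▸ hy).symm
    · exact absurd (hf.1 ((h y hyx).trans hy)) hyx
  · exact h x hx

end Aux

/-- if A and B are (1,n) (all workers except possibly w₁ have identical
preferences in A and B), then for M₁, M₂ stable under both, the join and meet in A
agree with those in B, and both are stable under both A and B. -/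
theorem stmt10 {n : ℕ} (hn : 1 ≤ n) (A B : SMInstance n) (w₁ : Fin n)
    (hW : ∀ w, w ≠ w₁ → A.wRank w = B.wRank w)
    (M₁ M₂ : Fin n → Fin n)
    (h₁ : IsStable A M₁ ∧ IsStable B M₁)
    (h₂ : IsStable A M₂ ∧ IsStable B M₂) :
    joinMap A M₁ M₂ = joinMap B M₁ M₂ ∧ meetMap A M₁ M₂ = meetMap B M₁ M₂ ∧
    (IsStable A (joinMap A M₁ M₂) ∧ IsStable B (joinMap A M₁ M₂)) ∧
    (IsStable A (meetMap A M₁ M₂) ∧ IsStable B (meetMap A M₁ M₂)) := by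
  obtain ⟨hA₁, hB₁⟩ := h₁
  obtain ⟨hA₂, hB₂⟩ := h₂
  have hJA := join_stable A hA₁ hA₂
  have hJB := join_stable B hB₁ hB₂
  have hKA := meet_stable A hA₁ hA₂
  have hKB := meet_stable B hB₁ hB₂
  have hJeq : joinMap A M₁ M₂ = joinMap B M₁ M₂ :=
    bij_eq_of_agree hJA.1 hJB.1 w₁ (fun w hw => by unfold joinMap; rw [hW w hw])
  have hKeq : meetMap A M₁ M₂ = meetMap B M₁ M₂ :=
    bij_eq_of_agree hKA.1 hKB.1 w₁ (fun w hw => by unfold meetMap; rw [hW w hw])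
  exact ⟨hJeq, hKeq, ⟨hJA, hJeq ▸ hJB⟩, ⟨hKA, hKeq ▸ hKB⟩⟩
end
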